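/- arXiv:2403.07890 — 3 statements merged into one kernel-verified Lean document; each statement's English description precedes it below -/
import Mathlib

section
/- For the step sizes α_t = (H+1)/(H+t), one has ∑_{j=1}^t α_t^j (α_j)^2 ≤ 3H/t for every t ≥ 1. -/
/-- For step sizes `α j = (H+1)/(H+j)`, one has `∑_{j=1}^t α_t^j (α_j)^2 ≤ 3H/t`. -/
theorem weighted_sq_stepsize_sum (H : ℕ) (hH : 1 ≤ H)
    (α : ℕ → ℝ) (hα : ∀ j, α j = (H + 1) / (H + j))
    (αw : ℕ → ℕ → ℝ)
    (hαw : ∀ t j, αw t j = α j * ∏ j' ∈ Finset.Ioc j t, (1 - α j')) :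
    ∀ t : ℕ, 1 ≤ t → ∑ j ∈ Finset.Icc 1 t, αw t j * (α j) ^ 2 ≤ 3 * H / t := by
  have hHr : (1:ℝ) ≤ H := by exact_mod_cast hH
  intro t ht
  induction t, ht using Nat.le_induction with
  | base =>
    have hα1 : α 1 = 1 := by
      rw [hα]; push_cast; rw [div_self]; positivity
    simp [hαw, hα1]
    linarith
  | succ t ht ih =>
    have hs : (1:ℝ) ≤ (t:ℝ) := by exact_mod_cast ht
    set s : ℝ := (t:ℝ) with hsdef
    set a : ℝ := α (t+1) with hadef
    have ha : a = (H + 1) / (H + s + 1) := by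
      rw [hadef, hα]; push_cast; rw [hsdef]; ring
    have hd : (0:ℝ) < H + s + 1 := by linarith
    have ha1 : 1 - a = s / (H + s + 1) := by
      rw [ha]; field_simp; ring
    have ha1nn : 0 ≤ 1 - a := by
      rw [ha1]; positivity
    have hsplit := Finset.sum_Icc_succ_top (a := 1) (b := t) (by omega)
      (f := fun j => αw (t+1) j * (α j) ^ 2)
    rw [hsplit]
    have hprod : ∀ j ∈ Finset.Icc 1 t, αw (t+1) j * (α j)^2
        = (1 - a) * (αw t j * (α j)^2) := by
      intro j hj
      have hjt : j ≤ t := (Finset.mem_Icc.mp hj).2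
      rw [hαw, hαw, Finset.prod_Ioc_succ_top (by omega)]
      ring
    rw [Finset.sum_congr rfl hprod, ← Finset.mul_sum]
    have hlast : αw (t+1) (t+1) * (α (t+1))^2 = a^3 := by
      rw [hαw, Finset.Ioc_self, Finset.prod_empty, ← hadef]; ring
    rw [hlast]
    have h1 : (1 - a) * (∑ j ∈ Finset.Icc 1 t, αw t j * α j ^ 2) ≤ (1 - a) * (3 * H / s) :=
      mul_le_mul_of_nonneg_left ih ha1nn
    have hcast : ((t + 1 : ℕ) : ℝ) = s + 1 := by push_cast; ring
    rw [hcast]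
    have h2 : (1 - a) * (3 * H / s) + a^3 ≤ 3 * H / (s + 1) := by
      rw [ha1, ha]
      have hs0 : (0:ℝ) < s := by linarith
      have hs1 : (0:ℝ) < s + 1 := by linarith
      have hcub : (0:ℝ) ≤ 11*(H:ℝ)^3 - 3*(H:ℝ)^2 - 3*(H:ℝ) - 1 := by
        nlinarith [mul_nonneg (sub_nonneg.mpr hHr) (sq_nonneg (H:ℝ)),
          mul_nonneg (sub_nonneg.mpr hHr) (by linarith : (0:ℝ) ≤ (H:ℝ)), hHr]
      have key : (s+1)*((H:ℝ)+1)^3 ≤ 3*(H:ℝ)^2*((H:ℝ)+s+1)^2 := by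
        nlinarith [mul_nonneg (by positivity : (0:ℝ) ≤ 3*(H:ℝ)^2) (sq_nonneg ((H:ℝ)-s-1)),
          mul_nonneg (by linarith : (0:ℝ) ≤ s+1) hcub]
      rw [div_pow, div_mul_div_comm, div_add_div _ _ (by positivity) (by positivity),
        div_le_div_iff₀ (by positivity) (by positivity)]
      nlinarith [mul_le_mul_of_nonneg_left key hs0.le,
        mul_pos (mul_pos hd hd) hd, mul_pos hs0 hd]
    linarith
end

section
/- For the step sizes α_t = (H+1)/(H+t), the weighted harmonic sum satisfies ∑_{j=1}^t α_t^j / j ≤ (1 + 1/H)·(1/t) for every t ≥ 1. -/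
/-- For step sizes `α j = (H+1)/(H+j)`, the weighted harmonic sum satisfies
`∑_{j=1}^t α_t^j / j ≤ (1 + 1/H) · (1/t)`. -/
theorem weighted_harmonic_sum (H : ℕ) (hH : 1 ≤ H)
    (α : ℕ → ℝ) (hα : ∀ j, α j = (H + 1) / (H + j))
    (αw : ℕ → ℕ → ℝ)
    (hαw : ∀ t j, αw t j = α j * ∏ j' ∈ Finset.Ioc j t, (1 - α j')) :
    ∀ t : ℕ, 1 ≤ t →
      ∑ j ∈ Finset.Icc 1 t, αw t j / j ≤ (1 + 1 / (H : ℝ)) * (1 / t) := by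
  have hHpos : (0:ℝ) < H := by exact_mod_cast Nat.lt_of_lt_of_le Nat.zero_lt_one hH
  intro t ht
  induction t, ht using Nat.le_induction with
  | base =>
    rw [show Finset.Icc 1 1 = {1} from rfl, Finset.sum_singleton, hαw, hα,
      Finset.Ioc_self, Finset.prod_empty, mul_one]
    push_cast
    rw [div_self (by positivity)]
    have h1 : 0 < 1 / (H:ℝ) := by positivity
    nlinarith
  | succ n hn ih =>
    have hn0 : (0:ℝ) < n := by exact_mod_cast hn
    have hd : (0:ℝ) < (H:ℝ) + n + 1 := by positivity
    have hsum : ∑ j ∈ Finset.Icc 1 (n+1), αw (n+1) j / (j:ℝ)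
        = (1 - α (n+1)) * (∑ j ∈ Finset.Icc 1 n, αw n j / j) + α (n+1) / (n+1) := by
      rw [Finset.sum_Icc_succ_top (by omega), Finset.mul_sum]
      congr 1
      · apply Finset.sum_congr rfl
        intro j hj
        rw [hαw, hαw, Finset.prod_Ioc_succ_top (Finset.mem_Icc.mp hj).2]
        push_cast
        ring
      · rw [hαw, Finset.Ioc_self, Finset.prod_empty, mul_one]
        push_cast
        ring
    have h1 : 1 - α (n+1) = (n:ℝ) / ((H:ℝ) + n + 1) := by
      rw [hα]; push_cast; field_simp; ring
    have hnn : 0 ≤ 1 - α (n+1) := by rw [h1]; positivity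
    have hα1 : α (n+1) = ((H:ℝ)+1)/((H:ℝ)+n+1) := by
      rw [hα]; push_cast; ring_nf
    have hmul := mul_le_mul_of_nonneg_left ih hnn
    have heq : (1 - α (n+1)) * ((1 + 1/(H:ℝ)) * (1/(n:ℝ))) + α (n+1) / ((n:ℝ)+1)
        = (1 + 1/(H:ℝ)) * (1/((n:ℝ)+1)) := by
      rw [h1, hα1]
      field_simp
      ring
    push_cast at hsum ⊢
    rw [hsum]
    push_cast
    linarith
end

section
/- If a sequence δ_h^t (h = 1,…,H+1, t ≥ 1) satisfies δ_{H+1}^t = 0 and δ_h^t ≤ ∑_{j=1}^t α_t^j δ_{h+1}^j + C·log(t)/t for a constant C ≥ 0, where α_t^j are the weights from step size α_t = (H+1)/(H+t), then δ_h^t ≤ 3C·(H−h+1)·log(t)/t for all h and t ≥ 2. -/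
/-- Backward induction for the weighted value-gap recursion: if `δ_{H+1}^t = 0` and
`δ_h^t ≤ ∑_{j=1}^t α_t^j δ_{h+1}^j + C log t / t`, then
`δ_h^t ≤ 3C (H−h+1) log t / t` for all `1 ≤ h ≤ H+1` and `t ≥ 2`. -/
theorem value_gap_recursion (H : ℕ) (hH : 1 ≤ H) (C : ℝ) (hC : 0 ≤ C)
    (α : ℕ → ℝ) (hα : ∀ j, α j = (H + 1) / (H + j))
    (αw : ℕ → ℕ → ℝ)
    (hαw : ∀ t j, αw t j = α j * ∏ j' ∈ Finset.Ioc j t, (1 - α j'))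
    (δ : ℕ → ℕ → ℝ)
    (hδ_nonneg : ∀ h t, 0 ≤ δ h t)
    (hδ_top : ∀ t, δ (H + 1) t = 0)
    (hδ_rec : ∀ h ∈ Finset.Icc 1 H, ∀ t : ℕ, 1 ≤ t →
      δ h t ≤ ∑ j ∈ Finset.Icc 1 t, αw t j * δ (h + 1) j + C * Real.log t / t) :
    ∀ h ∈ Finset.Icc 1 (H + 1), ∀ t : ℕ, 2 ≤ t →
      δ h t ≤ 3 * C * ((H : ℝ) - h + 1) * Real.log t / t := by
  have hHr : (1:ℝ) ≤ (H:ℝ) := by exact_mod_cast hH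
  have hHpos : (0:ℝ) < (H:ℝ) := lt_of_lt_of_le one_pos hHr
  -- basic facts about α
  have hα_nonneg : ∀ j : ℕ, 0 ≤ α j := by
    intro j; rw [hα]
    positivity
  have hα_le_one : ∀ j : ℕ, 1 ≤ j → α j ≤ 1 := by
    intro j hj
    rw [hα]
    rw [div_le_one (by positivity)]
    have : (1:ℝ) ≤ (j:ℝ) := by exact_mod_cast hj
    linarith
  have hα1 : α 1 = 1 := by
    rw [hα]
    push_cast
    field_simp
  -- nonnegativity of weights
  have hαw_nonneg : ∀ t j : ℕ, 0 ≤ αw t j := by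
    intro t j
    rw [hαw]
    apply mul_nonneg (hα_nonneg j)
    apply Finset.prod_nonneg
    intro j' hj'
    have hj1 : 1 ≤ j' := le_trans (Nat.one_le_iff_ne_zero.mpr (by
      intro h; rw [h] at hj'; simp [Finset.mem_Ioc] at hj')) le_rfl
    linarith [hα_le_one j' hj1]
  -- the last weight
  have hαw_last : ∀ t : ℕ, αw t t = α t := by
    intro t; rw [hαw]; simp
  -- the recursive weight identity
  have hαw_step : ∀ t j : ℕ, j ≤ t → αw (t+1) j = αw t j * (1 - α (t+1)) := by
    intro t j hjt
    rw [hαw, hαw, Finset.prod_Ioc_succ_top hjt]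
    ring
  -- sum of weights equals one
  have hsum1 : ∀ t : ℕ, 1 ≤ t → ∑ j ∈ Finset.Icc 1 t, αw t j = 1 := by
    intro t ht
    induction t with
    | zero => omega
    | succ t ih =>
      rcases Nat.eq_or_lt_of_le ht with h1 | h1
      · rw [← h1]
        simp [hαw_last, hα1]
      · have ht' : 1 ≤ t := by omega
        rw [show t + 1 = t + 1 from rfl,
          Finset.sum_Icc_succ_top (by omega : 1 ≤ t + 1)]
        have : ∑ j ∈ Finset.Icc 1 t, αw (t+1) j
            = (∑ j ∈ Finset.Icc 1 t, αw t j) * (1 - α (t+1)) := by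
          rw [Finset.sum_mul]
          apply Finset.sum_congr rfl
          intro j hj
          simp only [Finset.mem_Icc] at hj
          exact hαw_step t j hj.2
        rw [this, ih ht', hαw_last]
        ring
  -- weighted sum of 1/j
  have hsum2 : ∀ t : ℕ, 1 ≤ t →
      ∑ j ∈ Finset.Icc 1 t, αw t j / j ≤ ((H:ℝ)+1)/((H:ℝ)*t) := by
    intro t ht
    induction t with
    | zero => omega
    | succ t ih =>
      rcases Nat.eq_or_lt_of_le ht with h1 | h1
      · rw [← h1]
        simp only [Finset.Icc_self, Finset.sum_singleton, hαw_last, hα1]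
        push_cast
        rw [div_le_div_iff₀ one_pos (by linarith)]
        ring_nf
        linarith
      · have ht' : 1 ≤ t := by omega
        rw [Finset.sum_Icc_succ_top (by omega : 1 ≤ t + 1)]
        have hrw : ∑ j ∈ Finset.Icc 1 t, αw (t+1) j / j
            = (∑ j ∈ Finset.Icc 1 t, αw t j / j) * (1 - α (t+1)) := by
          rw [Finset.sum_mul]
          apply Finset.sum_congr rfl
          intro j hj
          simp only [Finset.mem_Icc] at hj
          rw [hαw_step t j hj.2]
          ring
        rw [hrw, hαw_last]
        have htr : (1:ℝ) ≤ (t:ℝ) := by exact_mod_cast ht'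
        have hα_t1 : α (t+1) = ((H:ℝ)+1)/((H:ℝ)+(t:ℝ)+1) := by
          rw [hα]; push_cast; ring_nf
        have h1α : 1 - α (t+1) = (t:ℝ)/((H:ℝ)+(t:ℝ)+1) := by
          rw [hα_t1]
          field_simp
          ring
        have hnn : (0:ℝ) ≤ 1 - α (t+1) := by
          rw [h1α]; positivity
        have hbound := ih ht'
        have : (∑ j ∈ Finset.Icc 1 t, αw t j / j) * (1 - α (t+1))
            ≤ (((H:ℝ)+1)/((H:ℝ)*t)) * (1 - α (t+1)) :=
          mul_le_mul_of_nonneg_right hbound hnn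
        have key : (((H:ℝ)+1)/((H:ℝ)*t)) * (1 - α (t+1)) + α (t+1) / (↑(t+1))
            = ((H:ℝ)+1)/((H:ℝ)*(↑(t+1))) := by
          rw [h1α, hα_t1]
          push_cast
          field_simp
          ring
        calc (∑ j ∈ Finset.Icc 1 t, αw t j / j) * (1 - α (t+1)) + α (t+1) / (↑(t+1))
            ≤ (((H:ℝ)+1)/((H:ℝ)*t)) * (1 - α (t+1)) + α (t+1) / (↑(t+1)) := by linarith
          _ = ((H:ℝ)+1)/((H:ℝ)*(↑(t+1))) := key
  -- δ h 1 = 0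
  have hδ1 : ∀ m : ℕ, ∀ h : ℕ, 1 ≤ h → h + m = H + 1 → δ h 1 = 0 := by
    intro m
    induction m with
    | zero =>
      intro h _ hhm
      have : h = H + 1 := by omega
      rw [this]; exact hδ_top 1
    | succ m ih =>
      intro h hh hhm
      have hnext : δ (h+1) 1 = 0 := ih (h+1) (by omega) (by omega)
      have hrec := hδ_rec h (Finset.mem_Icc.mpr ⟨hh, by omega⟩) 1 le_rfl
      simp only [Finset.Icc_self, Finset.sum_singleton, hαw_last, hα1, hnext,
        Nat.cast_one, Real.log_one] at hrec
      have := hδ_nonneg h 1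
      linarith
  -- main backward induction
  have main : ∀ m : ℕ, ∀ h : ℕ, 1 ≤ h → h + m = H + 1 → ∀ t : ℕ, 1 ≤ t →
      δ h t ≤ (H:ℝ) * ((1 + 1/(H:ℝ))^m - 1) * (C * Real.log t / t) := by
    intro m
    induction m with
    | zero =>
      intro h _ hhm t ht
      have : h = H + 1 := by omega
      rw [this, hδ_top t]
      simp
    | succ m ih =>
      intro h hh hhm t ht
      set K : ℝ := (H:ℝ) * ((1 + 1/(H:ℝ))^m - 1) with hK
      have hKnn : 0 ≤ K := by
        apply mul_nonneg (le_of_lt hHpos)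
        have : (1:ℝ) ≤ (1 + 1/(H:ℝ))^m := by
          apply one_le_pow₀
          have : (0:ℝ) < 1/(H:ℝ) := by positivity
          linarith
        linarith
      have hrec := hδ_rec h (Finset.mem_Icc.mpr ⟨hh, by omega⟩) t ht
      have htr : (1:ℝ) ≤ (t:ℝ) := by exact_mod_cast ht
      have hlogt : 0 ≤ Real.log t := Real.log_nonneg htr
      have hstep : ∑ j ∈ Finset.Icc 1 t, αw t j * δ (h+1) j
          ≤ ∑ j ∈ Finset.Icc 1 t, αw t j * (K * C * Real.log t / j) := by
        apply Finset.sum_le_sum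
        intro j hj
        simp only [Finset.mem_Icc] at hj
        apply mul_le_mul_of_nonneg_left _ (hαw_nonneg t j)
        have hδj := ih (h+1) (by omega) (by omega) j hj.1
        have hjr : (1:ℝ) ≤ (j:ℝ) := by exact_mod_cast hj.1
        calc δ (h+1) j ≤ K * (C * Real.log j / j) := hδj
          _ ≤ K * (C * Real.log t / j) := by
              have hlj : Real.log j ≤ Real.log t :=
                Real.log_le_log (by linarith) (by exact_mod_cast hj.2)
              have hjpos : (0:ℝ) < (j:ℝ) := by linarith
              gcongr
          _ = K * C * Real.log t / j := by ring
      have hsum2t := hsum2 t ht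
      have hstep2 : ∑ j ∈ Finset.Icc 1 t, αw t j * (K * C * Real.log t / j)
          ≤ K * C * Real.log t * (((H:ℝ)+1)/((H:ℝ)*t)) := by
        have : ∑ j ∈ Finset.Icc 1 t, αw t j * (K * C * Real.log t / j)
            = K * C * Real.log t * ∑ j ∈ Finset.Icc 1 t, αw t j / j := by
          rw [Finset.mul_sum]
          apply Finset.sum_congr rfl
          intro j _
          ring
        rw [this]
        apply mul_le_mul_of_nonneg_left hsum2t
        positivity
      have hfinal : K * C * Real.log t * (((H:ℝ)+1)/((H:ℝ)*t)) + C * Real.log t / t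
          = (H:ℝ) * ((1 + 1/(H:ℝ))^(m+1) - 1) * (C * Real.log t / t) := by
        have htpos : (0:ℝ) < (t:ℝ) := by linarith
        rw [hK]
        rw [pow_succ]
        field_simp
        ring
      calc δ h t ≤ ∑ j ∈ Finset.Icc 1 t, αw t j * δ (h+1) j + C * Real.log t / t := hrec
        _ ≤ K * C * Real.log t * (((H:ℝ)+1)/((H:ℝ)*t)) + C * Real.log t / t := by
            linarith [le_trans hstep hstep2]
        _ = (H:ℝ) * ((1 + 1/(H:ℝ))^(m+1) - 1) * (C * Real.log t / t) := hfinal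
  -- bound on the coefficient: for m ≤ H, (1+1/H)^m ≤ 1 + m/H + (m/H)^2
  have hpow : ∀ m : ℕ, m ≤ H →
      (1 + 1/(H:ℝ))^m ≤ 1 + m/(H:ℝ) + ((m:ℝ)/(H:ℝ))^2 := by
    intro m
    induction m with
    | zero => intro _; simp
    | succ m ih =>
      intro hm
      have hm' : m ≤ H := by omega
      have hmr : (m:ℝ) ≤ (H:ℝ) := by exact_mod_cast hm'
      have ihm := ih hm'
      have hnn : (0:ℝ) ≤ 1 + 1/(H:ℝ) := by positivity
      calc (1 + 1/(H:ℝ))^(m+1) = (1 + 1/(H:ℝ))^m * (1 + 1/(H:ℝ)) := pow_succ _ _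
        _ ≤ (1 + m/(H:ℝ) + ((m:ℝ)/(H:ℝ))^2) * (1 + 1/(H:ℝ)) := by
            apply mul_le_mul_of_nonneg_right ihm hnn
        _ ≤ 1 + (↑(m+1))/(H:ℝ) + ((↑(m+1):ℝ)/(H:ℝ))^2 := by
            push_cast
            rw [← sub_nonneg]
            have heq : (1 + ((m:ℝ) + 1) / (H:ℝ) + (((m:ℝ) + 1) / (H:ℝ)) ^ 2)
                - (1 + (m:ℝ) / (H:ℝ) + ((m:ℝ) / (H:ℝ)) ^ 2) * (1 + 1 / (H:ℝ))
                = ((H:ℝ) * ((m:ℝ) + 1) - (m:ℝ)^2) / (H:ℝ)^3 := by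
              field_simp
              ring
            rw [heq]
            apply div_nonneg _ (by positivity)
            nlinarith [Nat.cast_nonneg (α := ℝ) m]
  -- conclusion
  intro h hh t ht
  simp only [Finset.mem_Icc] at hh
  obtain ⟨hh1, hh2⟩ := hh
  set m := H + 1 - h with hm
  have hhm : h + m = H + 1 := by omega
  have hmH : m ≤ H := by omega
  have hmain := main m h hh1 hhm t (by omega)
  have htr : (2:ℝ) ≤ (t:ℝ) := by exact_mod_cast ht
  have hlogt : 0 ≤ Real.log t := Real.log_nonneg (by linarith)
  have hcl : 0 ≤ C * Real.log t / t := by positivity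
  have hmr : (m:ℝ) ≤ (H:ℝ) := by exact_mod_cast hmH
  have hKle : (H:ℝ) * ((1 + 1/(H:ℝ))^m - 1) ≤ 3 * m := by
    have hp := hpow m hmH
    have h1 : (H:ℝ) * ((1 + 1/(H:ℝ))^m - 1)
        ≤ (H:ℝ) * ((m:ℝ)/(H:ℝ) + ((m:ℝ)/(H:ℝ))^2) := by
      apply mul_le_mul_of_nonneg_left _ (le_of_lt hHpos)
      linarith
    have h2 : (H:ℝ) * ((m:ℝ)/(H:ℝ) + ((m:ℝ)/(H:ℝ))^2) = (m:ℝ) + (m:ℝ)^2/(H:ℝ) := by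
      field_simp
    have h3 : (m:ℝ)^2/(H:ℝ) ≤ (m:ℝ) := by
      rw [div_le_iff₀ hHpos]
      nlinarith [Nat.cast_nonneg (α := ℝ) m]
    linarith
  have hcast : (m:ℝ) = (H:ℝ) - h + 1 := by
    have hc : ((h + m : ℕ) : ℝ) = ((H + 1 : ℕ) : ℝ) := by rw [hhm]
    push_cast at hc
    linarith
  calc δ h t ≤ (H:ℝ) * ((1 + 1/(H:ℝ))^m - 1) * (C * Real.log t / t) := hmain
    _ ≤ 3 * m * (C * Real.log t / t) := mul_le_mul_of_nonneg_right hKle hcl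
    _ = 3 * C * ((H:ℝ) - h + 1) * Real.log t / t := by rw [← hcast]; ring
end
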